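/- Let φ be a complex-valued Schwartz function on ℝ with φ(x) = 0 for all x ≤ 0, and let ψ(x) = φ(x)/x for x > 0. Then for all natural numbers k, n and all 0 < x < 1 one has |x^k · ψ^{(n)}(x)| ≤ Σ_{j=0}^{n} (1 / ((n−j)! · (n+1))) · sup_{y ∈ ℝ} |φ^{(2n+1−j)}(y)|. -/

import Mathlib

open Finset Set

/-- The sup of the norm of the `m`-th derivative of a Schwartz map. -/
noncomputable def schwartzSupD (φ : SchwartzMap ℝ ℂ) (m : ℕ) : ℝ :=
  ⨆ y : ℝ, ‖iteratedDeriv m (⇑φ) y‖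

lemma schwartz_bddAbove (φ : SchwartzMap ℝ ℂ) (m : ℕ) :
    BddAbove (Set.range fun y : ℝ => ‖iteratedDeriv m (⇑φ) y‖) := by
  obtain ⟨C, -, hC⟩ := φ.decay 0 m
  refine ⟨C, ?_⟩
  rintro _ ⟨y, rfl⟩
  have := hC y
  simpa [← norm_iteratedFDeriv_eq_norm_iteratedDeriv] using this

lemma schwartz_le_supD (φ : SchwartzMap ℝ ℂ) (m : ℕ) (y : ℝ) :
    ‖iteratedDeriv m (⇑φ) y‖ ≤ schwartzSupD φ m :=
  le_ciSup (schwartz_bddAbove φ m) y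

lemma schwartz_supD_nonneg (φ : SchwartzMap ℝ ℂ) (m : ℕ) : 0 ≤ schwartzSupD φ m :=
  le_trans (norm_nonneg _) (schwartz_le_supD φ m 0)

lemma iteratedDeriv_zero_fun' {m : ℕ} :
    iteratedDeriv m (fun _ : ℝ => (0 : ℂ)) = fun _ => (0 : ℂ) := by
  induction m with
  | zero => rfl
  | succ p ih => rw [iteratedDeriv_succ, ih]; funext z; simp

lemma schwartz_iteratedDeriv_zero (φ : SchwartzMap ℝ ℂ)
    (hφ : ∀ x : ℝ, x ≤ 0 → φ x = 0) (m : ℕ) {y : ℝ} (hy : y ≤ 0) :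
    iteratedDeriv m (⇑φ) y = 0 := by
  have h0 : Set.EqOn (⇑φ) (fun _ : ℝ => (0 : ℂ)) (Iio 0) := fun z hz => hφ z (le_of_lt hz)
  have hEq : Set.EqOn (iteratedDeriv m (⇑φ)) (iteratedDeriv m (fun _ : ℝ => (0 : ℂ))) (Iio 0) :=
    h0.iteratedDeriv_of_isOpen isOpen_Iio m
  have hzero : iteratedDeriv m (fun _ : ℝ => (0 : ℂ)) = fun _ => (0 : ℂ) :=
    iteratedDeriv_zero_fun'
  have hEq' : Set.EqOn (iteratedDeriv m (⇑φ)) (fun _ : ℝ => (0 : ℂ)) (Iio 0) := by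
    intro z hz; rw [hEq hz, hzero]
  have hcont : Continuous (iteratedDeriv m (⇑φ)) :=
    (φ.smooth ⊤).continuous_iteratedDeriv m (by exact_mod_cast le_top)
  have hcl : Set.EqOn (iteratedDeriv m (⇑φ)) (fun _ : ℝ => (0 : ℂ)) (closure (Iio 0)) :=
    hEq'.closure hcont continuous_const
  have : y ∈ closure (Iio (0 : ℝ)) := by rw [closure_Iio]; exact hy
  exact hcl this

/-- Sharp Taylor-type bound: `‖φ^{(i)}(x)‖ ≤ x^m/m! · sup ‖φ^{(i+m)}‖` for `x ≥ 0`. -/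
lemma schwartz_taylor_bound (φ : SchwartzMap ℝ ℂ)
    (hφ : ∀ x : ℝ, x ≤ 0 → φ x = 0) :
    ∀ (m i : ℕ) (x : ℝ), 0 ≤ x →
      ‖iteratedDeriv i (⇑φ) x‖ ≤ x ^ m / (Nat.factorial m : ℝ) * schwartzSupD φ (i + m) := by
  intro m
  induction m with
  | zero =>
    intro i x _
    simpa using schwartz_le_supD φ i x
  | succ m ih =>
    intro i x hx
    have hsmooth : ContDiff ℝ (⊤ : ℕ∞) (⇑φ) := φ.smooth ⊤
    set S : ℝ := schwartzSupD φ (i + (m + 1)) with hSdef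
    have hS : 0 ≤ S := schwartz_supD_nonneg φ _
    have hB : ∀ t : ℝ, HasDerivAt (fun t : ℝ => t ^ (m + 1) / (Nat.factorial (m + 1) : ℝ) * S)
        (t ^ m / (Nat.factorial m : ℝ) * S) t := by
      intro t
      have h1 : HasDerivAt (fun t : ℝ => t ^ (m + 1)) ((m + 1 : ℕ) * t ^ m) t :=
        hasDerivAt_pow (m + 1) t
      have h2 := (h1.div_const (Nat.factorial (m + 1) : ℝ)).mul_const S
      refine h2.congr_deriv ?_
      have hfac : (Nat.factorial (m + 1) : ℝ) = (m + 1 : ℕ) * (Nat.factorial m : ℝ) := by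
        rw [Nat.factorial_succ]; push_cast; ring
      rw [hfac]
      have hm1 : ((m + 1 : ℕ) : ℝ) ≠ 0 := by positivity
      field_simp
    have hderiv : ∀ t ∈ Ico (0 : ℝ) x,
        HasDerivWithinAt (iteratedDeriv i (⇑φ)) (iteratedDeriv (i + 1) (⇑φ) t) (Ici t) t := by
      intro t _
      have hdiff : DifferentiableAt ℝ (iteratedDeriv i (⇑φ)) t :=
        (hsmooth.differentiable_iteratedDeriv i
          (by exact_mod_cast lt_top_iff_ne_top.2 (by simp))).differentiableAt
      have := hdiff.hasDerivAt
      rw [show deriv (iteratedDeriv i (⇑φ)) t = iteratedDeriv (i + 1) (⇑φ) t by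
        rw [iteratedDeriv_succ]] at this
      exact this.hasDerivWithinAt
    have hcont : ContinuousOn (iteratedDeriv i (⇑φ)) (Icc 0 x) :=
      (hsmooth.continuous_iteratedDeriv i (by exact_mod_cast le_top)).continuousOn
    have hbound : ∀ t ∈ Ico (0 : ℝ) x,
        ‖iteratedDeriv (i + 1) (⇑φ) t‖ ≤ t ^ m / (Nat.factorial m : ℝ) * S := by
      intro t ht
      have := ih (i + 1) t ht.1
      rw [show i + 1 + m = i + (m + 1) by omega] at this
      exact this
    have ha : ‖iteratedDeriv i (⇑φ) 0‖ ≤ (0 : ℝ) ^ (m + 1) / (Nat.factorial (m + 1) : ℝ) * S := by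
      rw [schwartz_iteratedDeriv_zero φ hφ i le_rfl]
      simp
    have key := image_norm_le_of_norm_deriv_right_le_deriv_boundary hcont hderiv ha hB hbound
      (x := x) ⟨hx, le_refl x⟩
    exact key

/-- Norm of the `m`-th derivative of `y ↦ (y : ℂ)⁻¹` at `x > 0`. -/
lemma inv_iteratedDeriv_norm (m : ℕ) {x : ℝ} (hx : 0 < x) :
    ‖iteratedDeriv m (fun y : ℝ => ((y : ℂ))⁻¹) x‖ = (Nat.factorial m : ℝ) / x ^ (m + 1) := by
  have hfun : (fun y : ℝ => ((y : ℂ))⁻¹) = (Complex.ofRealLI ∘ fun y : ℝ => y⁻¹) := by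
    funext y
    exact (Complex.ofReal_inv y).symm
  have hxIoi : x ∈ Ioi (0 : ℝ) := hx
  have hud : UniqueDiffOn ℝ (Ioi (0 : ℝ)) := isOpen_Ioi.uniqueDiffOn
  have hinv : ContDiffOn ℝ (⊤ : ℕ∞) (fun y : ℝ => y⁻¹) (Ioi 0) := by
    exact contDiffOn_id.inv fun y hy => ne_of_gt hy
  calc ‖iteratedDeriv m (fun y : ℝ => ((y : ℂ))⁻¹) x‖
      = ‖iteratedFDeriv ℝ m (fun y : ℝ => ((y : ℂ))⁻¹) x‖ :=
        (norm_iteratedFDeriv_eq_norm_iteratedDeriv).symm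
    _ = ‖iteratedFDerivWithin ℝ m (fun y : ℝ => ((y : ℂ))⁻¹) (Ioi 0) x‖ := by
        rw [iteratedFDerivWithin_of_isOpen m isOpen_Ioi hxIoi]
    _ = ‖iteratedFDerivWithin ℝ m (fun y : ℝ => y⁻¹) (Ioi 0) x‖ := by
        rw [hfun]
        exact Complex.ofRealLI.norm_iteratedFDerivWithin_comp_left (hinv x hxIoi) hud hxIoi (by exact_mod_cast le_top)
    _ = ‖iteratedFDeriv ℝ m (fun y : ℝ => y⁻¹) x‖ := by
        rw [iteratedFDerivWithin_of_isOpen m isOpen_Ioi hxIoi]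
    _ = ‖iteratedDeriv m (fun y : ℝ => y⁻¹) x‖ := norm_iteratedFDeriv_eq_norm_iteratedDeriv
    _ = (Nat.factorial m : ℝ) / x ^ (m + 1) := by
        rw [iteratedDeriv_eq_iterate]
        have : deriv^[m] (fun y : ℝ => y⁻¹) x = (∏ i ∈ Finset.range m, (-1 - i : ℝ)) *
            x ^ (-1 - m : ℤ) := by
              rw [show (fun y : ℝ => y⁻¹) = (· ^ (-1 : ℤ)) by funext y; simp]
              exact_mod_cast iter_deriv_zpow (-1) x m
        rw [this, Real.norm_eq_abs, abs_mul, Finset.abs_prod]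
        have h1 : ∀ i ∈ Finset.range m, |(-1 - i : ℝ)| = ((i + 1 : ℕ) : ℝ) := by
          intro i _
          rw [abs_of_nonpos (by linarith [Nat.cast_nonneg (α := ℝ) i])]
          push_cast; ring
        rw [Finset.prod_congr rfl h1]
        have h2 : (∏ i ∈ Finset.range m, ((i + 1 : ℕ) : ℝ)) = (Nat.factorial m : ℝ) := by
          rw [← Nat.cast_prod]
          norm_cast
          exact Finset.prod_range_add_one_eq_factorial m
        rw [h2]
        have h3 : |x ^ (-1 - m : ℤ)| = (x ^ (m + 1))⁻¹ := by
          rw [abs_of_pos (zpow_pos hx _)]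
          rw [show (-1 - m : ℤ) = -((m + 1 : ℕ) : ℤ) by push_cast; ring, zpow_neg, zpow_natCast]
        rw [h3, div_eq_mul_inv]

open Finset in
/-- For a Schwartz function `φ` on `ℝ` vanishing on `(-∞,0]` and `ψ x = φ x / x`,
for all `k n : ℕ` and `0 < x < 1` one has
`|x^k ψ^{(n)}(x)| ≤ ∑_{j=0}^{n} (1 / ((n−j)!·(n+1))) · sup_y |φ^{(2n+1−j)}(y)|`. -/
theorem schwartz_div_x_derivative_bound (φ : SchwartzMap ℝ ℂ)
    (hφ : ∀ x : ℝ, x ≤ 0 → φ x = 0) (k n : ℕ) (x : ℝ) (hx0 : 0 < x) (hx1 : x < 1) :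
    x ^ k * ‖iteratedDeriv n (fun y : ℝ => φ y / (y : ℂ)) x‖ ≤
      ∑ j ∈ Finset.range (n + 1),
        (1 / ((Nat.factorial (n - j) : ℝ) * ((n : ℝ) + 1))) *
          ⨆ y : ℝ, ‖iteratedDeriv (2 * n + 1 - j) (⇑φ) y‖ := by
  have hxIoi : x ∈ Ioi (0 : ℝ) := hx0
  have hud : UniqueDiffOn ℝ (Ioi (0 : ℝ)) := isOpen_Ioi.uniqueDiffOn
  have hφs : ContDiffOn ℝ (⊤ : ℕ∞) (⇑φ) (Ioi 0) := (φ.smooth ⊤).contDiffOn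
  have hg : ContDiffOn ℝ (⊤ : ℕ∞) (fun y : ℝ => ((y : ℂ))⁻¹) (Ioi 0) := by
    have hinv : ContDiffOn ℝ (⊤ : ℕ∞) (fun y : ℝ => y⁻¹) (Ioi 0) :=
      contDiffOn_id.inv fun y hy => ne_of_gt hy
    have : (fun y : ℝ => ((y : ℂ))⁻¹) = (⇑Complex.ofRealCLM ∘ fun y : ℝ => y⁻¹) := by
      funext y; simp [Function.comp]
    rw [this]
    exact Complex.ofRealCLM.contDiff.comp_contDiffOn hinv
  -- step 1 : drop the `x^k` factor
  have hxk : x ^ k ≤ 1 := pow_le_one₀ hx0.le hx1.le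
  have step1 : x ^ k * ‖iteratedDeriv n (fun y : ℝ => φ y / (y : ℂ)) x‖ ≤
      ‖iteratedDeriv n (fun y : ℝ => φ y / (y : ℂ)) x‖ := by
    exact mul_le_of_le_one_left (norm_nonneg _) hxk
  -- step 2 : Leibniz bound
  have hdiv : (fun y : ℝ => φ y / (y : ℂ)) = fun y : ℝ => φ y * ((y : ℂ))⁻¹ := by
    funext y; rw [div_eq_mul_inv]
  have step2 : ‖iteratedDeriv n (fun y : ℝ => φ y / (y : ℂ)) x‖ ≤
      ∑ i ∈ Finset.range (n + 1), (n.choose i : ℝ) * ‖iteratedDeriv i (⇑φ) x‖ *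
        ((Nat.factorial (n - i) : ℝ) / x ^ (n - i + 1)) := by
    rw [hdiv, ← norm_iteratedFDeriv_eq_norm_iteratedDeriv,
      ← iteratedFDerivWithin_of_isOpen n isOpen_Ioi hxIoi]
    refine le_trans (norm_iteratedFDerivWithin_mul_le hφs hg hud hxIoi (by exact_mod_cast le_top)) ?_
    refine Finset.sum_le_sum fun i _ => ?_
    rw [iteratedFDerivWithin_of_isOpen i isOpen_Ioi hxIoi,
      iteratedFDerivWithin_of_isOpen (n - i) isOpen_Ioi hxIoi,
      norm_iteratedFDeriv_eq_norm_iteratedDeriv, norm_iteratedFDeriv_eq_norm_iteratedDeriv,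
      inv_iteratedDeriv_norm (n - i) hx0]
  -- step 3 : bound each term
  have step3 : ∀ i ∈ Finset.range (n + 1),
      (n.choose i : ℝ) * ‖iteratedDeriv i (⇑φ) x‖ *
        ((Nat.factorial (n - i) : ℝ) / x ^ (n - i + 1)) ≤
      (1 / ((Nat.factorial i : ℝ) * ((n : ℝ) + 1))) * schwartzSupD φ (n + 1 + i) := by
    intro i hi
    have hin : i ≤ n := Nat.lt_succ_iff.mp (Finset.mem_range.mp hi)
    have htay := schwartz_taylor_bound φ hφ (n + 1) i x hx0.le
    rw [show i + (n + 1) = n + 1 + i by omega] at htay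
    have hpos : (0 : ℝ) < (Nat.factorial (n - i) : ℝ) / x ^ (n - i + 1) := by positivity
    have hS : 0 ≤ schwartzSupD φ (n + 1 + i) := schwartz_supD_nonneg φ _
    calc (n.choose i : ℝ) * ‖iteratedDeriv i (⇑φ) x‖ *
          ((Nat.factorial (n - i) : ℝ) / x ^ (n - i + 1))
        ≤ (n.choose i : ℝ) * (x ^ (n + 1) / (Nat.factorial (n + 1) : ℝ) *
            schwartzSupD φ (n + 1 + i)) * ((Nat.factorial (n - i) : ℝ) / x ^ (n - i + 1)) := by
          apply mul_le_mul_of_nonneg_right _ hpos.le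
          exact mul_le_mul_of_nonneg_left htay (by positivity)
      _ = ((n.choose i : ℝ) * (Nat.factorial (n - i) : ℝ) / (Nat.factorial (n + 1) : ℝ)) *
            x ^ i * schwartzSupD φ (n + 1 + i) := by
          have hxne : x ≠ 0 := ne_of_gt hx0
          have hxsplit : x ^ (n + 1) = x ^ i * x ^ (n - i + 1) := by
            rw [← pow_add]; congr 1; omega
          rw [hxsplit]
          field_simp
      _ ≤ ((n.choose i : ℝ) * (Nat.factorial (n - i) : ℝ) / (Nat.factorial (n + 1) : ℝ)) *
            1 * schwartzSupD φ (n + 1 + i) := by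
          apply mul_le_mul_of_nonneg_right _ hS
          apply mul_le_mul_of_nonneg_left (pow_le_one₀ hx0.le hx1.le) (by positivity)
      _ = (1 / ((Nat.factorial i : ℝ) * ((n : ℝ) + 1))) * schwartzSupD φ (n + 1 + i) := by
          have hkey : (n.choose i : ℝ) * (Nat.factorial i : ℝ) * (Nat.factorial (n - i) : ℝ) =
              (Nat.factorial n : ℝ) := by
            rw [← Nat.cast_mul, ← Nat.cast_mul]
            norm_cast
            exact Nat.choose_mul_factorial_mul_factorial hin
          have hfs : (Nat.factorial (n + 1) : ℝ) = ((n : ℝ) + 1) * (Nat.factorial n : ℝ) := by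
            rw [Nat.factorial_succ]; push_cast; ring
          have hi0 : (Nat.factorial i : ℝ) ≠ 0 := by positivity
          have hn0 : (Nat.factorial n : ℝ) ≠ 0 := by positivity
          have hn1 : ((n : ℝ) + 1) ≠ 0 := by positivity
          rw [mul_one, hfs]
          field_simp
          linear_combination schwartzSupD φ (n + 1 + i) * hkey
  -- step 4 : assemble, reindex the RHS
  have hRHS : ∑ j ∈ Finset.range (n + 1),
      (1 / ((Nat.factorial (n - j) : ℝ) * ((n : ℝ) + 1))) *
        (⨆ y : ℝ, ‖iteratedDeriv (2 * n + 1 - j) (⇑φ) y‖) =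
      ∑ i ∈ Finset.range (n + 1),
        (1 / ((Nat.factorial i : ℝ) * ((n : ℝ) + 1))) * schwartzSupD φ (n + 1 + i) := by
    rw [← Finset.sum_range_reflect]
    refine Finset.sum_congr rfl fun i hi => ?_
    have hin : i ≤ n := Nat.lt_succ_iff.mp (Finset.mem_range.mp hi)
    have h1 : n + 1 - 1 - i = n - i := by omega
    have h2 : n - (n - i) = i := by omega
    have h3 : 2 * n + 1 - (n - i) = n + 1 + i := by omega
    rw [h1, h2, h3]
    rfl
  calc x ^ k * ‖iteratedDeriv n (fun y : ℝ => φ y / (y : ℂ)) x‖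
      ≤ ‖iteratedDeriv n (fun y : ℝ => φ y / (y : ℂ)) x‖ := step1
    _ ≤ ∑ i ∈ Finset.range (n + 1), (n.choose i : ℝ) * ‖iteratedDeriv i (⇑φ) x‖ *
        ((Nat.factorial (n - i) : ℝ) / x ^ (n - i + 1)) := step2
    _ ≤ ∑ i ∈ Finset.range (n + 1),
        (1 / ((Nat.factorial i : ℝ) * ((n : ℝ) + 1))) * schwartzSupD φ (n + 1 + i) :=
        Finset.sum_le_sum step3
    _ = _ := hRHS.symm
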